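/- Let x, p ∈ ℝ³ with x ≠ 0, and set ℓ = x × p, a = p × ℓ − x/|x|. If ℓ ≠ 0, then p = (ℓ × a)/‖ℓ‖² + (ℓ × x)/(‖ℓ‖²·|x|); if moreover G(x,p) = −1/2, then ‖p − (ℓ × a)/‖ℓ‖²‖ = 1/‖ℓ‖, i.e. p lies on the circle in momentum space with center (ℓ × a)/‖ℓ‖² and radius 1/‖ℓ‖. -/

import Mathlib

set_option maxHeartbeats 1000000


/-- Euclidean dot product on `Fin 3 → ℝ`. -/
noncomputable def dot3 (x p : Fin 3 → ℝ) : ℝ := x 0 * p 0 + x 1 * p 1 + x 2 * p 2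

/-- Cross product on `Fin 3 → ℝ`. -/
noncomputable def cross3 (x p : Fin 3 → ℝ) : Fin 3 → ℝ :=
  ![x 1 * p 2 - x 2 * p 1, x 2 * p 0 - x 0 * p 2, x 0 * p 1 - x 1 * p 0]

/-- Euclidean norm on `Fin 3 → ℝ`. -/
noncomputable def norm3 (x : Fin 3 → ℝ) : ℝ := Real.sqrt (dot3 x x)

/-- The Kepler Hamiltonian `G(x,p) = |p|²/2 − 1/|x|`. -/
noncomputable def keplerG (x p : Fin 3 → ℝ) : ℝ := norm3 p ^ 2 / 2 - 1 / norm3 x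

lemma dot3_self_nonneg (x : Fin 3 → ℝ) : 0 ≤ dot3 x x := by
  unfold dot3; nlinarith [sq_nonneg (x 0), sq_nonneg (x 1), sq_nonneg (x 2)]

lemma norm3_sq (x : Fin 3 → ℝ) : norm3 x ^ 2 = dot3 x x :=
  Real.sq_sqrt (dot3_self_nonneg x)

lemma norm3_pos {x : Fin 3 → ℝ} (hx : x ≠ 0) : 0 < norm3 x := by
  rcases eq_or_lt_of_le (dot3_self_nonneg x) with h | h
  · exfalso; apply hx; funext i
    have h' : dot3 x x = 0 := h.symm
    unfold dot3 at h'
    have h0 : x 0 = 0 := mul_self_eq_zero.mp (by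
      nlinarith [mul_self_nonneg (x 1), mul_self_nonneg (x 2)])
    have h1 : x 1 = 0 := mul_self_eq_zero.mp (by
      nlinarith [mul_self_nonneg (x 0), mul_self_nonneg (x 2)])
    have h2 : x 2 = 0 := mul_self_eq_zero.mp (by
      nlinarith [mul_self_nonneg (x 0), mul_self_nonneg (x 1)])
    fin_cases i
    · simpa using h0
    · simpa using h1
    · simpa using h2
  · exact Real.sqrt_pos.mpr h

lemma vec3_ext {v w : Fin 3 → ℝ} (h0 : v 0 = w 0) (h1 : v 1 = w 1) (h2 : v 2 = w 2) :
    v = w := by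
  funext i; fin_cases i <;> assumption

/-- with `ℓ = x × p`, `a = p × ℓ − x/|x|`: if `ℓ ≠ 0` then
`p = (ℓ × a)/‖ℓ‖² + (ℓ × x)/(‖ℓ‖² |x|)`; if moreover `G(x,p) = −1/2`, then
`‖p − (ℓ × a)/‖ℓ‖²‖ = 1/‖ℓ‖`. -/
theorem stmt2 (x p : Fin 3 → ℝ) (hx : x ≠ 0)
    (hl : cross3 x p ≠ 0) :
    p = (norm3 (cross3 x p) ^ 2)⁻¹ •
          cross3 (cross3 x p) (cross3 p (cross3 x p) - (norm3 x)⁻¹ • x)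
        + (norm3 (cross3 x p) ^ 2 * norm3 x)⁻¹ • cross3 (cross3 x p) x ∧
    (keplerG x p = -(1/2) →
      norm3 (p - (norm3 (cross3 x p) ^ 2)⁻¹ •
          cross3 (cross3 x p) (cross3 p (cross3 x p) - (norm3 x)⁻¹ • x))
        = 1 / norm3 (cross3 x p)) := by
  have hR : 0 < norm3 x := norm3_pos hx
  have hL : 0 < norm3 (cross3 x p) := norm3_pos hl
  have hR2 : norm3 x ^ 2 = dot3 x x := norm3_sq x
  have hL2 : norm3 (cross3 x p) ^ 2 = dot3 (cross3 x p) (cross3 x p) := norm3_sq _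
  set R := norm3 x with hRdef
  set L := norm3 (cross3 x p) with hLdef
  have hLL : L ^ 2 = (x 1 * p 2 - x 2 * p 1) ^ 2 + (x 2 * p 0 - x 0 * p 2) ^ 2
      + (x 0 * p 1 - x 1 * p 0) ^ 2 := by
    rw [hL2]; simp [dot3, cross3]; ring
  have h1 : p = (L ^ 2)⁻¹ •
          cross3 (cross3 x p) (cross3 p (cross3 x p) - R⁻¹ • x)
        + (L ^ 2 * R)⁻¹ • cross3 (cross3 x p) x := by
    apply vec3_ext <;>
      (simp only [cross3, dot3, Pi.add_apply, Pi.smul_apply, Pi.sub_apply, smul_eq_mul,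
        Matrix.cons_val_zero, Matrix.cons_val_one, Matrix.head_cons,
        Matrix.cons_val_two, Matrix.tail_cons]
       field_simp)
    · linear_combination R * p 0 * hLL
    · linear_combination R * p 1 * hLL
    · linear_combination R * p 2 * hLL
  refine ⟨h1, fun _ => ?_⟩
  have hd : p - (L ^ 2)⁻¹ •
        cross3 (cross3 x p) (cross3 p (cross3 x p) - R⁻¹ • x)
      = (L ^ 2 * R)⁻¹ • cross3 (cross3 x p) x := by
    nth_rewrite 1 [h1]; abel
  rw [hd]
  have hperp : dot3 (cross3 (cross3 x p) x) (cross3 (cross3 x p) x)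
      = dot3 (cross3 x p) (cross3 x p) * dot3 x x := by
    simp [dot3, cross3]; ring
  have hdot : dot3 ((L ^ 2 * R)⁻¹ • cross3 (cross3 x p) x)
      ((L ^ 2 * R)⁻¹ • cross3 (cross3 x p) x)
      = (L⁻¹) ^ 2 := by
    have hsc : dot3 ((L ^ 2 * R)⁻¹ • cross3 (cross3 x p) x)
        ((L ^ 2 * R)⁻¹ • cross3 (cross3 x p) x)
        = ((L ^ 2 * R)⁻¹) ^ 2 * dot3 (cross3 (cross3 x p) x) (cross3 (cross3 x p) x) := by
      simp only [dot3, Pi.smul_apply, smul_eq_mul]; ring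
    rw [hsc, hperp, ← hL2, ← hR2]
    field_simp
  rw [norm3, hdot, Real.sqrt_sq (by positivity), one_div]
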